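/- arXiv:math/0605771 — 3 statements merged into one kernel-verified Lean document; each statement's English description precedes it below -/
import Mathlib

section
/- Let D ⊆ ℝⁿ be open, f : D → ℝᵐ locally Lipschitz, p ∈ D, and for δ > 0 let S_δ := closure of the convex hull of {Df(x) : x ∈ (p + δB) ∩ Ω(f)}, where Ω(f) is the set of differentiability points of f and B the open unit ball. Then ∂ᴾf(p) := ⋂_{δ>0} S_δ is a nonempty, convex, compact subset of the space of m×n matrices. -/
open Filter Topology Pointwise

/-- `f` is locally Lipschitz on `D`. -/
def LocallyLipschitzOnSet {X Y : Type*} [NormedAddCommGroup X] [NormedSpace ℝ X]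
    [NormedAddCommGroup Y] [NormedSpace ℝ Y] (D : Set X) (f : X → Y) : Prop :=
  ∀ p ∈ D, ∃ K : NNReal, ∃ U ∈ 𝓝 p, LipschitzOnWith K f U

/-- The points of `D` where `f` is differentiable. -/
def diffPts {n m : ℕ} (D : Set (EuclideanSpace ℝ (Fin n)))
    (f : EuclideanSpace ℝ (Fin n) → EuclideanSpace ℝ (Fin m)) :
    Set (EuclideanSpace ℝ (Fin n)) :=
  {x | x ∈ D ∧ DifferentiableAt ℝ f x}

/-- Pourciau's generalized Jacobian. -/
noncomputable def pourciauJacobian {n m : ℕ} (D : Set (EuclideanSpace ℝ (Fin n)))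
    (f : EuclideanSpace ℝ (Fin n) → EuclideanSpace ℝ (Fin m))
    (p : EuclideanSpace ℝ (Fin n)) :
    Set (EuclideanSpace ℝ (Fin n) →L[ℝ] EuclideanSpace ℝ (Fin m)) :=
  ⋂ δ ∈ Set.Ioi (0 : ℝ),
    closure (convexHull ℝ (fderiv ℝ f '' (Metric.ball p δ ∩ diffPts D f)))

/-- Clarke's generalized Jacobian. -/
noncomputable def clarkeJacobian {n m : ℕ} (D : Set (EuclideanSpace ℝ (Fin n)))
    (f : EuclideanSpace ℝ (Fin n) → EuclideanSpace ℝ (Fin m))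
    (p : EuclideanSpace ℝ (Fin n)) :
    Set (EuclideanSpace ℝ (Fin n) →L[ℝ] EuclideanSpace ℝ (Fin m)) :=
  convexHull ℝ {A | ∃ u : ℕ → EuclideanSpace ℝ (Fin n),
    (∀ i, u i ∈ diffPts D f) ∧ Tendsto u atTop (𝓝 p) ∧
    Tendsto (fun i => fderiv ℝ f (u i)) atTop (𝓝 A)}

/-- Pourciau's generalized Jacobian is nonempty, convex and compact. -/
theorem pourciauJacobian_nonempty_convex_compact {n m : ℕ}
    (D : Set (EuclideanSpace ℝ (Fin n))) (hD : IsOpen D)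
    (f : EuclideanSpace ℝ (Fin n) → EuclideanSpace ℝ (Fin m))
    (hf : LocallyLipschitzOnSet D f) (p : EuclideanSpace ℝ (Fin n)) (hp : p ∈ D) :
    (pourciauJacobian D f p).Nonempty ∧ Convex ℝ (pourciauJacobian D f p) ∧
      IsCompact (pourciauJacobian D f p) := by
  classical
  obtain ⟨K, U, hU, hK⟩ := hf p hp
  obtain ⟨r, hr, hball⟩ := Metric.mem_nhds_iff.1 (Filter.inter_mem hU (hD.mem_nhds hp))
  set S : ℝ → Set (EuclideanSpace ℝ (Fin n) →L[ℝ] EuclideanSpace ℝ (Fin m)) :=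
    fun δ => closure (convexHull ℝ (fderiv ℝ f '' (Metric.ball p δ ∩ diffPts D f))) with hS
  have hKlip : LipschitzOnWith K f (Metric.ball p r) :=
    hK.mono (hball.trans Set.inter_subset_left)
  -- monotonicity
  have hmono : ∀ {a b : ℝ}, a ≤ b → S a ⊆ S b := by
    intro a b hab
    exact closure_mono (convexHull_mono (Set.image_mono
      (Set.inter_subset_inter_left _ (Metric.ball_subset_ball hab))))
  -- nonemptiness of each S δ for 0 < δ
  have hne : ∀ δ : ℝ, 0 < δ → (S δ).Nonempty := by
    intro δ hδ
    have hae : ∀ᵐ x ∂(MeasureTheory.volume),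
        x ∈ Metric.ball p r → DifferentiableWithinAt ℝ f (Metric.ball p r) x :=
      hKlip.ae_differentiableWithinAt_of_mem
    have hpos : MeasureTheory.volume (Metric.ball p (min δ r)) ≠ 0 := by
      exact (Metric.measure_ball_pos _ _ (lt_min hδ hr)).ne'
    obtain ⟨x, hx, hxd⟩ := MeasureTheory.Measure.exists_mem_of_measure_ne_zero_of_ae hpos (MeasureTheory.ae_restrict_of_ae hae)
    have hxr : x ∈ Metric.ball p r := Metric.ball_subset_ball (min_le_right _ _) hx
    have hxδ : x ∈ Metric.ball p δ := Metric.ball_subset_ball (min_le_left _ _) hx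
    have hxD : x ∈ D := (hball hxr).2
    have hdiff : DifferentiableAt ℝ f x :=
      (hxd hxr).differentiableAt (Metric.isOpen_ball.mem_nhds hxr)
    exact ⟨fderiv ℝ f x, subset_closure (subset_convexHull ℝ _
      ⟨x, ⟨hxδ, hxD, hdiff⟩, rfl⟩)⟩
  -- each S δ with δ ≤ r is compact
  have hbound : ∀ δ : ℝ, δ ≤ r → S δ ⊆ Metric.closedBall 0 K := by
    intro δ hδr
    have h1 : fderiv ℝ f '' (Metric.ball p δ ∩ diffPts D f) ⊆ Metric.closedBall 0 K := by
      rintro _ ⟨x, ⟨hxδ, _⟩, rfl⟩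
      have hxr : x ∈ Metric.ball p r := Metric.ball_subset_ball hδr hxδ
      have : ‖fderiv ℝ f x‖ ≤ K :=
        norm_fderiv_le_of_lipschitzOn ℝ (Metric.isOpen_ball.mem_nhds hxr) hKlip
      simpa [dist_eq_norm] using this
    have h2 : convexHull ℝ (fderiv ℝ f '' (Metric.ball p δ ∩ diffPts D f)) ⊆
        Metric.closedBall 0 K := (convex_closedBall _ _).convexHull_subset_iff.2 h1
    calc S δ ⊆ closure (Metric.closedBall 0 (K : ℝ)) := closure_mono h2
      _ = Metric.closedBall 0 (K : ℝ) := Metric.isClosed_closedBall.closure_eq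
  have hcpt : ∀ δ : ℝ, δ ≤ r → IsCompact (S δ) := by
    intro δ hδr
    exact Metric.isCompact_of_isClosed_isBounded isClosed_closure
      (Metric.isBounded_closedBall.subset (hbound δ hδr))
  -- the sequence T k := S (r / (k+1))
  set T : ℕ → Set (EuclideanSpace ℝ (Fin n) →L[ℝ] EuclideanSpace ℝ (Fin m)) :=
    fun k => S (r / (k + 1)) with hT
  have hrk : ∀ k : ℕ, (0 : ℝ) < r / (k + 1) := fun k =>
    div_pos hr (by positivity)
  have hrk' : ∀ k : ℕ, r / (k + 1) ≤ r := fun k => by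
    rw [div_le_iff₀ (by positivity : (0:ℝ) < (k:ℝ) + 1)]
    nlinarith [hr.le, (Nat.cast_nonneg k : (0:ℝ) ≤ k)]
  have hTne : (⋂ k, T k).Nonempty := by
    apply IsCompact.nonempty_iInter_of_sequence_nonempty_isCompact_isClosed
    · intro k
      apply hmono
      apply div_le_div_of_nonneg_left hr.le (by positivity)
      push_cast; linarith
    · intro k; exact hne _ (hrk k)
    · exact hcpt _ (hrk' 0)
    · intro k; exact isClosed_closure
  have hsub : (⋂ k, T k) ⊆ pourciauJacobian D f p := by
    intro A hA
    simp only [pourciauJacobian, Set.mem_iInter]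
    intro δ hδ
    rw [Set.mem_Ioi] at hδ
    obtain ⟨k, hk⟩ := exists_nat_ge (r / δ)
    have hle : r / (k + 1) ≤ δ := by
      rw [div_le_iff₀ (by positivity : (0:ℝ) < (k:ℝ) + 1)]
      rw [div_le_iff₀ hδ] at hk
      nlinarith
    exact hmono hle (Set.mem_iInter.1 hA k)
  refine ⟨hTne.mono hsub, ?_, ?_⟩
  · exact convex_iInter₂ fun δ _ => (convex_convexHull ℝ _).closure
  · have hclosed : IsClosed (pourciauJacobian D f p) :=
      isClosed_biInter fun δ _ => isClosed_closure
    have hsubr : pourciauJacobian D f p ⊆ S r := by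
      intro A hA
      exact Set.mem_iInter₂.1 hA r hr
    exact (hcpt r le_rfl).of_isClosed_subset hclosed hsubr
end

section
/- Let D ⊆ ℝⁿ be open, f : D → ℝᵐ locally Lipschitz, p ∈ D. Then the Pourciau generalized Jacobian ∂ᴾf(p) := ⋂_{δ>0} co̅{Df(x) : x ∈ (p+δB)∩Ω(f)} equals Clarke's generalized Jacobian ∂f(p) := co{A : ∃ xᵢ ∈ Ω(f), xᵢ → p, Df(xᵢ) → A}. -/
open Filter Topology Pointwise

section HullHelper
open Set Metric

theorem myIsCompact_convexHull {E : Type*} [NormedAddCommGroup E] [NormedSpace ℝ E]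
    [FiniteDimensional ℝ E] {s : Set E} (hs : IsCompact s) : IsCompact (convexHull ℝ s) := by
  classical
  rcases s.eq_empty_or_nonempty with h | ⟨s₀, hs₀⟩
  · simp [h]
  set N := Module.finrank ℝ E + 1 with hN
  have hT : IsCompact ((stdSimplex ℝ (Fin N)) ×ˢ (Set.univ.pi fun _ : Fin N => s)) :=
    (isCompact_stdSimplex (𝕜 := ℝ) (ι := Fin N)).prod (isCompact_univ_pi fun _ => hs)
  have hg : Continuous fun q : (Fin N → ℝ) × (Fin N → E) => ∑ i, q.1 i • q.2 i :=
    continuous_finset_sum _ fun i _ =>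
      ((continuous_apply i).comp continuous_fst).smul ((continuous_apply i).comp continuous_snd)
  have himg : (fun q : (Fin N → ℝ) × (Fin N → E) => ∑ i, q.1 i • q.2 i) ''
      ((stdSimplex ℝ (Fin N)) ×ˢ (Set.univ.pi fun _ : Fin N => s)) = convexHull ℝ s := by
    apply Subset.antisymm
    · rintro x ⟨⟨w, z⟩, ⟨hw, hz⟩, rfl⟩
      exact (convex_convexHull ℝ s).sum_mem (fun i _ => hw.1 i) hw.2
        (fun i _ => subset_convexHull ℝ s (hz i (Set.mem_univ i)))
    · intro x hx
      obtain ⟨ι, hι, z, w, hzs, hai, hw0, hw1, hwz⟩ := eq_pos_convex_span_of_mem_convexHull hx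
      have hcard : Fintype.card ι ≤ N := le_trans hai.card_le_finrank_succ
        (add_le_add_left (Submodule.finrank_le _) 1)
      let e : ι → Fin N := fun j => Fin.castLE hcard (Fintype.equivFin ι j)
      have he_inj : Function.Injective e :=
        (Fin.castLE_injective hcard).comp (Fintype.equivFin ι).injective
      let emb : ι ↪ Fin N := ⟨e, he_inj⟩
      let w' : Fin N → ℝ := fun i => if h : ∃ j, e j = i then w h.choose else 0
      let z' : Fin N → E := fun i => if h : ∃ j, e j = i then z h.choose else s₀
      have key : ∀ j, w' (emb j) = w j ∧ z' (emb j) = z j := by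
        intro j
        have hex : ∃ j', e j' = emb j := ⟨j, rfl⟩
        have hj : hex.choose = j := he_inj hex.choose_spec
        constructor <;> simp only [w', z', dif_pos hex, hj]
      have hvan : ∀ i ∈ Finset.univ, i ∉ Finset.univ.map emb → w' i = 0 := by
        intro i _ hi
        have : ¬ ∃ j, e j = i := by
          intro ⟨j, hj⟩
          exact hi (Finset.mem_map.mpr ⟨j, Finset.mem_univ j, hj⟩)
        simp only [w', dif_neg this]
      have hsum1 : ∑ i, w' i = 1 := by
        rw [← Finset.sum_subset (Finset.subset_univ (Finset.univ.map emb)) hvan,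
          Finset.sum_map]
        rw [Finset.sum_congr rfl fun j _ => (key j).1]
        exact hw1
      have hsum2 : ∑ i, w' i • z' i = x := by
        rw [← Finset.sum_subset (Finset.subset_univ (Finset.univ.map emb))
          (fun i hi h2 => by rw [hvan i hi h2, zero_smul]), Finset.sum_map]
        rw [Finset.sum_congr rfl fun j _ => by rw [(key j).1, (key j).2]]
        exact hwz
      refine ⟨(w', z'), ⟨⟨fun i => ?_, hsum1⟩, fun i _ => ?_⟩, hsum2⟩
      · by_cases h : ∃ j, e j = i
        · simp only [w', dif_pos h]; exact (hw0 _).le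
        · simp only [w', dif_neg h]; exact le_refl 0
      · by_cases h : ∃ j, e j = i
        · simp only [z', dif_pos h]; exact hzs (Set.mem_range_self _)
        · simp only [z', dif_neg h]; exact hs₀
  rw [← himg]
  exact hT.image hg

end HullHelper

/-- The set of derivative values near `p`. -/
def Sset {n m : ℕ} (D : Set (EuclideanSpace ℝ (Fin n)))
    (f : EuclideanSpace ℝ (Fin n) → EuclideanSpace ℝ (Fin m))
    (p : EuclideanSpace ℝ (Fin n)) (δ : ℝ) :
    Set (EuclideanSpace ℝ (Fin n) →L[ℝ] EuclideanSpace ℝ (Fin m)) :=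
  fderiv ℝ f '' (Metric.ball p δ ∩ diffPts D f)

/-- The set of limiting derivative values at `p`. -/
def Lset {n m : ℕ} (D : Set (EuclideanSpace ℝ (Fin n)))
    (f : EuclideanSpace ℝ (Fin n) → EuclideanSpace ℝ (Fin m))
    (p : EuclideanSpace ℝ (Fin n)) :
    Set (EuclideanSpace ℝ (Fin n) →L[ℝ] EuclideanSpace ℝ (Fin m)) :=
  {A | ∃ u : ℕ → EuclideanSpace ℝ (Fin n),
    (∀ i, u i ∈ diffPts D f) ∧ Tendsto u atTop (𝓝 p) ∧
    Tendsto (fun i => fderiv ℝ f (u i)) atTop (𝓝 A)}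


/-- Pourciau's and Clarke's generalized Jacobians coincide. -/
theorem pourciauJacobian_eq_clarkeJacobian {n m : ℕ}
    (D : Set (EuclideanSpace ℝ (Fin n))) (hD : IsOpen D)
    (f : EuclideanSpace ℝ (Fin n) → EuclideanSpace ℝ (Fin m))
    (hf : LocallyLipschitzOnSet D f) (p : EuclideanSpace ℝ (Fin n)) (hp : p ∈ D) :
    pourciauJacobian D f p = clarkeJacobian D f p := by
  classical
  obtain ⟨K, U, hU, hlip⟩ := hf p hp
  obtain ⟨r, hr0, hrU⟩ : ∃ r > 0, Metric.ball p r ⊆ U ∩ D := by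
    have h1 : U ∩ D ∈ 𝓝 p := Filter.inter_mem hU (hD.mem_nhds hp)
    rcases Metric.mem_nhds_iff.mp h1 with ⟨r, hr0, hr⟩
    exact ⟨r, hr0, hr⟩
  have hPmem : ∀ A, A ∈ pourciauJacobian D f p ↔
      ∀ δ : ℝ, 0 < δ → A ∈ closure (convexHull ℝ (Sset D f p δ)) := by
    intro A
    simp only [pourciauJacobian, Set.mem_iInter, Set.mem_Ioi]
    rfl
  have hCeq : clarkeJacobian D f p = convexHull ℝ (Lset D f p) := rfl
  -- derivative bound
  have hbound : ∀ x ∈ Metric.ball p r ∩ diffPts D f, ‖fderiv ℝ f x‖ ≤ K := by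
    intro x hx
    have hUx : U ∈ 𝓝 x := Filter.mem_of_superset
      (Metric.isOpen_ball.mem_nhds hx.1) (fun y hy => (hrU hy).1)
    exact (hx.2.2.hasFDerivAt).le_of_lipschitzOn hUx hlip
  have hSsub : ∀ δ : ℝ, δ ≤ r → Sset D f p δ ⊆ Metric.closedBall 0 K := by
    rintro δ hδr B ⟨x, hx, rfl⟩
    rw [mem_closedBall_zero_iff]
    exact hbound x ⟨Metric.ball_subset_ball hδr hx.1, hx.2⟩
  -- Rademacher density
  have hdense : ∀ δ : ℝ, 0 < δ → δ ≤ r → (Metric.ball p δ ∩ diffPts D f).Nonempty := by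
    intro δ hδ hδr
    have hlip' : LipschitzOnWith K f (Metric.ball p r) :=
      hlip.mono (fun y hy => (hrU hy).1)
    have hae := hlip'.ae_differentiableWithinAt_of_mem (μ := MeasureTheory.volume)
    have hnull : MeasureTheory.volume (Metric.ball p δ \
        {x | x ∈ Metric.ball p r → DifferentiableWithinAt ℝ f (Metric.ball p r) x}) = 0 :=
      MeasureTheory.measure_mono_null (fun x hx => hx.2) (MeasureTheory.ae_iff.mp hae)
    have hpos : MeasureTheory.volume (Metric.ball p δ) ≠ 0 :=
      (Metric.measure_ball_pos _ _ hδ).ne'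
    have hne : (Metric.ball p δ ∩
        {x | x ∈ Metric.ball p r → DifferentiableWithinAt ℝ f (Metric.ball p r) x}).Nonempty := by
      apply MeasureTheory.nonempty_of_measure_ne_zero (μ := MeasureTheory.volume)
      rw [← Set.diff_diff_right_self, MeasureTheory.measure_diff_null hnull]
      exact hpos
    obtain ⟨x, hxδ, hxP⟩ := hne
    have hxr : x ∈ Metric.ball p r := Metric.ball_subset_ball hδr hxδ
    exact ⟨x, hxδ, (hrU hxr).2,
      (hxP hxr).differentiableAt (Metric.isOpen_ball.mem_nhds hxr)⟩
  have htendr : Tendsto (fun j : ℕ => r / ((j : ℝ) + 1)) atTop (𝓝 0) := by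
    simpa only [mul_one_div, mul_zero] using
      tendsto_one_div_add_atTop_nhds_zero_nat.const_mul r
  -- L ⊆ closure (S δ)
  have hLsub : ∀ A ∈ Lset D f p, ∀ δ : ℝ, 0 < δ → A ∈ closure (Sset D f p δ) := by
    rintro A ⟨u, hu, hup, huD⟩ δ hδ
    have hev : ∀ᶠ i in atTop, fderiv ℝ f (u i) ∈ Sset D f p δ := by
      filter_upwards [hup (Metric.isOpen_ball.mem_nhds (Metric.mem_ball_self hδ))] with i hi
      exact ⟨u i, ⟨hi, hu i⟩, rfl⟩
    exact mem_closure_of_tendsto huD hev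
  -- converse construction
  have hLeq : ∀ A, (∀ δ : ℝ, 0 < δ → A ∈ closure (Sset D f p δ)) → A ∈ Lset D f p := by
    intro A hA
    have hsel : ∀ j : ℕ, ∃ x, (x ∈ Metric.ball p (r / ((j : ℝ) + 1)) ∩ diffPts D f) ∧
        dist (fderiv ℝ f x) A < 1 / ((j : ℝ) + 1) := by
      intro j
      have hδ : (0:ℝ) < r / ((j : ℝ) + 1) := by positivity
      have h1 : (0:ℝ) < 1 / ((j : ℝ) + 1) := by positivity
      rcases Metric.mem_closure_iff.mp (hA _ hδ) _ h1 with ⟨B, ⟨x, hx, rfl⟩, hB⟩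
      exact ⟨x, hx, by rwa [dist_comm]⟩
    choose x hx hdist using hsel
    refine ⟨x, fun j => (hx j).2, ?_, ?_⟩
    · rw [tendsto_iff_dist_tendsto_zero]
      exact squeeze_zero (fun j => dist_nonneg)
        (fun j => (Metric.mem_ball.mp (hx j).1).le) htendr
    · rw [tendsto_iff_dist_tendsto_zero]
      exact squeeze_zero (fun j => dist_nonneg) (fun j => (hdist j).le)
        tendsto_one_div_add_atTop_nhds_zero_nat
  -- subsequence extractor
  have hextract : ∀ x : ℕ → EuclideanSpace ℝ (Fin n),
      (∀ j : ℕ, x j ∈ Metric.ball p (r / ((j : ℝ) + 1)) ∩ diffPts D f) →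
      ∃ A ∈ Lset D f p, ∃ φ : ℕ → ℕ, StrictMono φ ∧
        Tendsto (fun j => fderiv ℝ f (x (φ j))) atTop (𝓝 A) := by
    intro x hx
    have hmem : ∀ j, fderiv ℝ f (x j) ∈
        Metric.closedBall (0 : EuclideanSpace ℝ (Fin n) →L[ℝ] EuclideanSpace ℝ (Fin m)) K := by
      intro j
      have hle : r / ((j : ℝ) + 1) ≤ r := by
        rw [div_le_iff₀ (by positivity)]
        nlinarith [hr0.le, Nat.cast_nonneg (α := ℝ) j]
      exact hSsub _ hle ⟨x j, hx j, rfl⟩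
    obtain ⟨A, -, φ, hφ, hA⟩ := (isCompact_closedBall _ _).tendsto_subseq hmem
    have hA' : Tendsto (fun j => fderiv ℝ f (x (φ j))) atTop (𝓝 A) := hA
    refine ⟨A, ⟨fun j => x (φ j), fun j => (hx (φ j)).2, ?_, hA'⟩, φ, hφ, hA'⟩
    rw [tendsto_iff_dist_tendsto_zero]
    refine squeeze_zero (fun j => dist_nonneg) (fun j => ?_) htendr
    refine le_trans (Metric.mem_ball.mp (hx (φ j)).1).le ?_
    have hj : (j : ℝ) + 1 ≤ (φ j : ℝ) + 1 := by
      exact_mod_cast Nat.succ_le_succ hφ.le_apply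
    gcongr
  -- compactness of L
  have hLcpt : IsCompact (Lset D f p) := by
    have h1 : Lset D f p ⊆ Metric.closedBall 0 K := fun A hA =>
      closure_minimal (hSsub r le_rfl) Metric.isClosed_closedBall (hLsub A hA r hr0)
    have heq : Lset D f p = ⋂ (δ : ℝ) (_ : 0 < δ), closure (Sset D f p δ) := by
      apply Set.Subset.antisymm
      · intro A hA
        exact Set.mem_iInter₂.mpr (fun δ hδ => hLsub A hA δ hδ)
      · intro A hA
        exact hLeq A (fun δ hδ => Set.mem_iInter₂.mp hA δ hδ)
    have h2 : IsClosed (Lset D f p) := by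
      rw [heq]
      exact isClosed_iInter fun δ => isClosed_iInter fun _ => isClosed_closure
    exact (isCompact_closedBall _ _).of_isClosed_subset h2 h1
  have hco : IsCompact (convexHull ℝ (Lset D f p)) := myIsCompact_convexHull hLcpt
  -- main equality
  ext A
  rw [hPmem, hCeq]
  constructor
  · -- Pourciau ⊆ Clarke
    intro hA
    have step2 : ∀ ε : ℝ, 0 < ε → ∃ δ : ℝ, 0 < δ ∧
        Sset D f p δ ⊆ convexHull ℝ (Lset D f p) + Metric.closedBall 0 ε := by
      intro ε hε
      by_contra hcon
      push_neg at hcon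
      have hsel : ∀ j : ℕ, ∃ x, (x ∈ Metric.ball p (r / ((j : ℝ) + 1)) ∩ diffPts D f) ∧
          fderiv ℝ f x ∉ convexHull ℝ (Lset D f p) + Metric.closedBall 0 ε := by
        intro j
        have hδ : (0:ℝ) < r / ((j : ℝ) + 1) := by positivity
        obtain ⟨B, hBS, hBout⟩ := Set.not_subset.mp (hcon _ hδ)
        obtain ⟨x, hx, rfl⟩ := hBS
        exact ⟨x, hx, hBout⟩
      choose x hx hout using hsel
      obtain ⟨A', hA'L, φ, hφ, hconv⟩ := hextract x hx
      have hev : ∀ᶠ j in atTop, fderiv ℝ f (x (φ j)) ∈ Metric.ball A' ε :=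
        hconv (Metric.isOpen_ball.mem_nhds (Metric.mem_ball_self hε))
      obtain ⟨j, hj⟩ := hev.exists
      apply hout (φ j)
      refine Set.mem_add.mpr ⟨A', subset_convexHull ℝ _ hA'L, fderiv ℝ f (x (φ j)) - A', ?_, by abel⟩
      rw [mem_closedBall_zero_iff, ← dist_eq_norm]
      exact (Metric.mem_ball.mp hj).le
    have hmem : ∀ ε : ℝ, 0 < ε →
        A ∈ convexHull ℝ (Lset D f p) + Metric.closedBall 0 ε := by
      intro ε hε
      obtain ⟨δ, hδ, hsub⟩ := step2 ε hε
      have hclosed : IsClosed (convexHull ℝ (Lset D f p) + Metric.closedBall 0 ε) :=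
        (hco.add (isCompact_closedBall _ _)).isClosed
      have hconv : Convex ℝ (convexHull ℝ (Lset D f p) + Metric.closedBall 0 ε) :=
        (convex_convexHull ℝ _).add (convex_closedBall _ _)
      exact closure_minimal (convexHull_min hsub hconv) hclosed (hA δ hδ)
    have hcl : A ∈ closure (convexHull ℝ (Lset D f p)) := by
      rw [Metric.mem_closure_iff]
      intro ε hε
      obtain ⟨y, hy, b, hb, hyb⟩ := Set.mem_add.mp (hmem (ε/2) (by positivity))
      refine ⟨y, hy, ?_⟩
      have hAy : A - y = b := by rw [← hyb]; abel
      rw [dist_eq_norm, hAy]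
      calc ‖b‖ ≤ ε/2 := mem_closedBall_zero_iff.mp hb
        _ < ε := by linarith
    rwa [hco.isClosed.closure_eq] at hcl
  · -- Clarke ⊆ Pourciau
    intro hA δ hδ
    have h1 : Lset D f p ⊆ closure (convexHull ℝ (Sset D f p δ)) :=
      fun B hB => closure_mono (subset_convexHull ℝ _) (hLsub B hB δ hδ)
    exact convexHull_min h1 ((convex_convexHull ℝ _).closure) hA
end

section
/- Let D ⊆ ℝⁿ be open and convex, f : D → ℝᵐ locally Lipschitz, and a, b ∈ D. Then f(b) − f(a) ∈ co̅{A(b−a) : A ∈ ∂f(x), x ∈ [a,b]}, where [a,b] is the segment from a to b. -/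
open Filter Topology Pointwise

section Auxiliary

open Filter Topology Pointwise MeasureTheory Metric

lemma exists_unif_lip {X Y : Type*} [NormedAddCommGroup X] [NormedSpace ℝ X]
    [NormedAddCommGroup Y] [NormedSpace ℝ Y]
    {D : Set X} (hD : IsOpen D) {f : X → Y}
    (hf : ∀ p ∈ D, ∃ K : NNReal, ∃ U ∈ 𝓝 p, LipschitzOnWith K f U)
    {s : Set X} (hs : IsCompact s) (hsD : s ⊆ D) :
    ∃ δ > 0, ∃ K : NNReal, ∀ x : X, (∃ p ∈ s, dist x p ≤ δ) →
      closedBall x δ ⊆ D ∧ LipschitzOnWith K f (closedBall x δ) := by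
  have key : ∀ p ∈ s, ∃ r : ℝ, 0 < r ∧ ∃ K : NNReal,
      closedBall p (3 * r) ⊆ D ∧ LipschitzOnWith K f (closedBall p (3 * r)) := by
    intro p hp
    obtain ⟨K, U, hU, hKU⟩ := hf p (hsD hp)
    obtain ⟨ε, hε, hball⟩ := Metric.mem_nhds_iff.1 (Filter.inter_mem hU (hD.mem_nhds (hsD hp)))
    have hsub : closedBall p (3 * (ε / 4)) ⊆ U ∩ D := by
      intro y hy
      exact hball (lt_of_le_of_lt (mem_closedBall.1 hy) (by linarith))
    exact ⟨ε / 4, by linarith, K, fun y hy => (hsub hy).2, hKU.mono fun y hy => (hsub hy).1⟩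
  choose! r hr K hK hlip using key
  obtain ⟨t, hts, hcover⟩ := hs.elim_nhds_subcover (fun p => ball p (r p))
    (fun p hp => ball_mem_nhds p (hr p hp))
  by_cases hne : s.Nonempty
  · obtain ⟨p₀, hp₀⟩ := hne
    have htne : t.Nonempty := by
      obtain ⟨q, hq, _⟩ := Set.mem_iUnion₂.1 (hcover hp₀)
      exact ⟨q, hq⟩
    set δ : ℝ := t.inf' htne r with hδdef
    have hδpos : 0 < δ := by
      exact (Finset.lt_inf'_iff htne).2 fun q hq => hr q (hts q hq)
    set Kmax : NNReal := t.sup' htne K with hKdef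
    refine ⟨δ, hδpos, Kmax, ?_⟩
    rintro x ⟨p, hp, hxp⟩
    obtain ⟨q, hq, hpq⟩ := Set.mem_iUnion₂.1 (hcover hp)
    have hqs := hts q hq
    have hδle : δ ≤ r q := Finset.inf'_le _ hq
    have hsub : closedBall x δ ⊆ closedBall q (3 * r q) := by
      intro y hy
      have h1 : dist y x ≤ δ := mem_closedBall.1 hy
      have h2 : dist p q < r q := mem_ball.1 hpq
      have h3 : dist y q ≤ dist y x + dist x p + dist p q := dist_triangle4 _ _ _ _
      refine mem_closedBall.2 (h3.trans (by linarith))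
    refine ⟨fun y hy => hK q hqs (hsub hy), fun u hu v hv => le_trans (((hlip q hqs).mono hsub) hu hv) ?_⟩
    exact mul_le_mul_left (by exact_mod_cast Finset.le_sup' K hq) _
  · rw [Set.not_nonempty_iff_eq_empty] at hne
    refine ⟨1, one_pos, 1, ?_⟩
    rintro x ⟨p, hp, -⟩
    simp [hne] at hp

lemma lip_ftc {h : ℝ → ℝ} {C r : ℝ} (hr : 0 < r) (hC : 0 ≤ C)
    (hlip : ∀ t ∈ Set.Icc (0:ℝ) (1+r), ∀ s : ℝ, |s - t| ≤ r → |h s - h t| ≤ C * |s - t|)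
    (hdiff : ∀ᵐ t ∂(volume.restrict (Set.Ioo (0:ℝ) 1)), DifferentiableAt ℝ h t) :
    MeasureTheory.IntegrableOn (deriv h) (Set.Ioo 0 1) ∧
      h 1 - h 0 = ∫ t in Set.Ioo (0:ℝ) 1, deriv h t := by
  -- continuity of h on [0, 1+r]
  have hcont : ∀ t ∈ Set.Icc (0:ℝ) (1+r), ContinuousAt h t := by
    intro t ht
    rw [Metric.continuousAt_iff]
    intro ε hε
    refine ⟨min r (ε / (C + 1)), lt_min hr (by positivity), fun {s} hst => ?_⟩
    rw [Real.dist_eq] at hst ⊢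
    have h1 : |s - t| ≤ r := le_of_lt (lt_of_lt_of_le hst (min_le_left _ _))
    have h2 := hlip t ht s h1
    have h3 : |s - t| < ε / (C + 1) := lt_of_lt_of_le hst (min_le_right _ _)
    calc |h s - h t| ≤ C * |s - t| := h2
      _ ≤ (C+1) * |s - t| := by nlinarith [abs_nonneg (s - t)]
      _ < (C+1) * (ε / (C+1)) := by
          apply mul_lt_mul_of_pos_left h3 (by linarith)
      _ = ε := by field_simp
  set ε : ℕ → ℝ := fun k => r / (k + 1) with hεdef
  have hεpos : ∀ k, 0 < ε k := fun k => by positivity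
  have hεler : ∀ k, ε k ≤ r := fun k => by
    rw [hεdef]
    rw [div_le_iff₀ (by positivity)]
    nlinarith [Nat.cast_nonneg (α := ℝ) k]
  have hεlim : Tendsto ε atTop (𝓝 0) := by
    have := tendsto_one_div_add_atTop_nhds_zero_nat (𝕜 := ℝ)
    have h2 : Tendsto (fun k : ℕ => r * (1 / (k + 1))) atTop (𝓝 (r * 0)) := this.const_mul r
    simpa [hεdef, div_eq_mul_inv, mul_comm] using h2
  -- integrability of h on subintervals of [0, 1+r]
  have hcont' : ContinuousOn h (Set.Icc (0:ℝ) (1+r)) :=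
    fun t ht => (hcont t ht).continuousWithinAt
  have hint : ∀ u v : ℝ, 0 ≤ u → u ≤ 1 + r → 0 ≤ v → v ≤ 1 + r →
      IntervalIntegrable h volume u v := by
    intro u v hu hu' hv hv'
    apply ContinuousOn.intervalIntegrable
    apply hcont'.mono
    intro z hz
    rcases Set.mem_uIcc.1 hz with ⟨h1, h2⟩ | ⟨h1, h2⟩ <;> constructor <;> linarith
  set q : ℕ → ℝ → ℝ := fun k t => (ε k)⁻¹ * (h (t + ε k) - h t) with hqdef
  -- value of the integral of q k
  have hIq : ∀ k, ∫ t in Set.Ioo (0:ℝ) 1, q k t =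
      (ε k)⁻¹ * ((∫ t in (1:ℝ)..(1 + ε k), h t) - ∫ t in (0:ℝ)..(ε k), h t) := by
    intro k
    have e0 : (0:ℝ) ≤ ε k := (hεpos k).le
    have e1 : ε k ≤ r := hεler k
    have i1 : IntervalIntegrable (fun t => h (t + ε k)) volume 0 1 := by
      have := (hint (ε k) (1 + ε k) e0 (by linarith) (by linarith) (by linarith)).comp_add_right (ε k)
      simpa using this
    have i2 : IntervalIntegrable h volume 0 1 := hint 0 1 le_rfl (by linarith) zero_le_one (by linarith)
    rw [← MeasureTheory.integral_Ioc_eq_integral_Ioo, ← intervalIntegral.integral_of_le zero_le_one]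
    calc ∫ t in (0:ℝ)..1, q k t
        = (ε k)⁻¹ * ∫ t in (0:ℝ)..1, (h (t + ε k) - h t) := by
          rw [← intervalIntegral.integral_const_mul]
      _ = (ε k)⁻¹ * ((∫ t in (0:ℝ)..1, h (t + ε k)) - ∫ t in (0:ℝ)..1, h t) := by
          rw [intervalIntegral.integral_sub i1 i2]
      _ = (ε k)⁻¹ * ((∫ t in (ε k)..(1 + ε k), h t) - ∫ t in (0:ℝ)..1, h t) := by
          rw [intervalIntegral.integral_comp_add_right h (ε k)]
          norm_num
      _ = (ε k)⁻¹ * ((∫ t in (1:ℝ)..(1 + ε k), h t) - ∫ t in (0:ℝ)..(ε k), h t) := by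
          have a1 : (∫ t in (ε k)..(1:ℝ), h t) + ∫ t in (1:ℝ)..(1 + ε k), h t
              = ∫ t in (ε k)..(1 + ε k), h t :=
            intervalIntegral.integral_add_adjacent_intervals
              (hint (ε k) 1 e0 (by linarith) zero_le_one (by linarith))
              (hint 1 (1 + ε k) zero_le_one (by linarith) (by linarith) (by linarith))
          have a2 : (∫ t in (0:ℝ)..(ε k), h t) + ∫ t in (ε k)..(1:ℝ), h t
              = ∫ t in (0:ℝ)..1, h t :=
            intervalIntegral.integral_add_adjacent_intervals
              (hint 0 (ε k) le_rfl (by linarith) e0 (by linarith))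
              (hint (ε k) 1 e0 (by linarith) zero_le_one (by linarith))
          rw [← a1, ← a2]; ring
  -- the endpoint integrals converge
  have hRlim : Tendsto (fun k => (ε k)⁻¹ *
      ((∫ t in (1:ℝ)..(1 + ε k), h t) - ∫ t in (0:ℝ)..(ε k), h t)) atTop (𝓝 (h 1 - h 0)) := by
    rw [tendsto_iff_dist_tendsto_zero]
    apply squeeze_zero (fun k => dist_nonneg) (g := fun k => 2 * C * ε k)
    · intro k
      have e0 : (0:ℝ) < ε k := hεpos k
      have e1 : ε k ≤ r := hεler k
      have b1 : ‖(∫ t in (1:ℝ)..(1 + ε k), h t) - (ε k) * h 1‖ ≤ C * ε k * |1 + ε k - 1| := by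
        have : (ε k) * h 1 = ∫ _t in (1:ℝ)..(1 + ε k), h 1 := by
          rw [intervalIntegral.integral_const, smul_eq_mul]; ring
        rw [this, ← intervalIntegral.integral_sub
            (hint 1 (1 + ε k) zero_le_one (by linarith) (by linarith) (by linarith))
            intervalIntegrable_const]
        apply intervalIntegral.norm_integral_le_of_norm_le_const
        intro z hz
        rw [Set.uIoc_of_le (by linarith)] at hz
        have hzc : z ∈ Set.Icc (0:ℝ) (1 + r) := ⟨by linarith [hz.1], by linarith [hz.2]⟩
        have : |h z - h 1| ≤ C * |z - 1| := by
          have := hlip z hzc 1 (by rw [abs_sub_comm]; rw [abs_le]; constructor <;> linarith [hz.1, hz.2])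
          calc |h z - h 1| = |h 1 - h z| := abs_sub_comm _ _
            _ ≤ C * |1 - z| := this
            _ = C * |z - 1| := by rw [abs_sub_comm]
        refine this.trans ?_
        have : |z - 1| ≤ ε k := by rw [abs_le]; constructor <;> linarith [hz.1, hz.2]
        nlinarith
      have b2 : ‖(∫ t in (0:ℝ)..(ε k), h t) - (ε k) * h 0‖ ≤ C * ε k * |ε k - 0| := by
        have : (ε k) * h 0 = ∫ _t in (0:ℝ)..(ε k), h 0 := by
          rw [intervalIntegral.integral_const]; simp [smul_eq_mul]
        rw [this, ← intervalIntegral.integral_sub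
            (hint 0 (ε k) le_rfl (by linarith) e0.le (by linarith)) intervalIntegrable_const]
        apply intervalIntegral.norm_integral_le_of_norm_le_const
        intro z hz
        rw [Set.uIoc_of_le (by linarith)] at hz
        have hzc : z ∈ Set.Icc (0:ℝ) (1 + r) := ⟨by linarith [hz.1], by linarith [hz.2]⟩
        have h0c : (0:ℝ) ∈ Set.Icc (0:ℝ) (1 + r) := ⟨le_rfl, by linarith⟩
        have habs : |z - 0| ≤ r := by rw [abs_le]; constructor <;> linarith [hz.1, hz.2]
        have := hlip 0 h0c z habs
        have h2 : |h z - h 0| ≤ C * |z - 0| := by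
          calc |h z - h 0| = |h z - h 0| := rfl
            _ ≤ C * |z - 0| := this
        refine h2.trans ?_
        have : |z - 0| ≤ ε k := by rw [abs_le]; constructor <;> linarith [hz.1, hz.2]
        nlinarith
      set A := ∫ t in (1:ℝ)..(1 + ε k), h t with hA'
      set B := ∫ t in (0:ℝ)..(ε k), h t with hB'
      rw [Real.norm_eq_abs] at b1 b2
      have habs1 : |1 + ε k - 1| = ε k := by
        rw [show (1:ℝ) + ε k - 1 = ε k by ring, abs_of_pos e0]
      have habs2 : |ε k - 0| = ε k := by rw [sub_zero, abs_of_pos e0]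
      rw [habs1] at b1; rw [habs2] at b2
      rw [Real.dist_eq]
      have key : (ε k)⁻¹ * (A - B) - (h 1 - h 0)
          = (ε k)⁻¹ * ((A - ε k * h 1) - (B - ε k * h 0)) := by
        field_simp
        ring
      rw [key, abs_mul, abs_of_pos (inv_pos.2 e0)]
      have htri : |(A - ε k * h 1) - (B - ε k * h 0)| ≤ C * ε k * ε k + C * ε k * ε k :=
        (abs_sub _ _).trans (add_le_add b1 b2)
      calc (ε k)⁻¹ * |(A - ε k * h 1) - (B - ε k * h 0)|
          ≤ (ε k)⁻¹ * (C * ε k * ε k + C * ε k * ε k) := by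
            exact mul_le_mul_of_nonneg_left htri (inv_pos.2 e0).le
        _ = 2 * C * ε k := by field_simp; ring
    · have := hεlim.const_mul (2 * C)
      simpa using this
  -- pointwise a.e. convergence of difference quotients
  have hq_lim : ∀ᵐ t ∂(volume.restrict (Set.Ioo (0:ℝ) 1)),
      Tendsto (fun k => q k t) atTop (𝓝 (deriv h t)) := by
    filter_upwards [hdiff] with t ht
    have hslope := hasDerivAt_iff_tendsto_slope.1 ht.hasDerivAt
    have htend : Tendsto (fun k => t + ε k) atTop (𝓝[≠] t) := by
      apply tendsto_nhdsWithin_of_tendsto_nhds_of_eventually_within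
      · simpa using tendsto_const_nhds.add hεlim
      · exact Eventually.of_forall fun k => by simp [(hεpos k).ne']
    have hcomp := hslope.comp htend
    convert hcomp using 2 with k
    show q k t = slope h t (t + ε k)
    rw [slope_def_field, show t + ε k - t = ε k by ring, div_eq_inv_mul]
  -- measurability
  have hq_meas : ∀ k, AEStronglyMeasurable (q k) (volume.restrict (Set.Ioo (0:ℝ) 1)) := by
    intro k
    apply ContinuousOn.aestronglyMeasurable _ measurableSet_Ioo
    intro t ht
    have h1 : ContinuousAt h t := hcont t ⟨ht.1.le, by linarith [ht.2, hr.le]⟩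
    have h2 : ContinuousAt h (t + ε k) :=
      hcont _ ⟨by linarith [ht.1, (hεpos k).le], by linarith [ht.2, hεler k]⟩
    have h3 : ContinuousAt (fun s : ℝ => h (s + ε k)) t :=
      ContinuousAt.comp (f := fun s : ℝ => s + ε k) h2
        (continuousAt_id.add continuousAt_const)
    exact (continuousAt_const.mul (h3.sub h1)).continuousWithinAt
  -- uniform bound
  have hq_bd : ∀ k, ∀ᵐ t ∂(volume.restrict (Set.Ioo (0:ℝ) 1)), ‖q k t‖ ≤ C := by
    intro k
    filter_upwards [MeasureTheory.ae_restrict_mem measurableSet_Ioo] with t ht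
    have h1 : t ∈ Set.Icc (0:ℝ) (1 + r) := ⟨ht.1.le, by linarith [ht.2, hr.le]⟩
    have h2 := hlip t h1 (t + ε k)
      (by rw [show t + ε k - t = ε k by ring, abs_of_pos (hεpos k)]; exact hεler k)
    rw [show t + ε k - t = ε k by ring, abs_of_pos (hεpos k)] at h2
    rw [Real.norm_eq_abs]
    show |(ε k)⁻¹ * (h (t + ε k) - h t)| ≤ C
    rw [abs_mul, abs_of_pos (inv_pos.2 (hεpos k))]
    calc (ε k)⁻¹ * |h (t + ε k) - h t| ≤ (ε k)⁻¹ * (C * ε k) :=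
          mul_le_mul_of_nonneg_left h2 (inv_pos.2 (hεpos k)).le
      _ = C := by rw [mul_comm C, ← mul_assoc, inv_mul_cancel₀ (hεpos k).ne', one_mul]
  have hCint : MeasureTheory.Integrable (fun _ : ℝ => C)
      (volume.restrict (Set.Ioo (0:ℝ) 1)) := by
    rw [MeasureTheory.integrable_const_iff]
    right
    exact isFiniteMeasure_restrict.2 measure_Ioo_lt_top.ne
  have hderiv_meas : AEStronglyMeasurable (deriv h) (volume.restrict (Set.Ioo (0:ℝ) 1)) :=
    (measurable_deriv h).aestronglyMeasurable.restrict
  have hbd_lim : ∀ᵐ t ∂(volume.restrict (Set.Ioo (0:ℝ) 1)), ‖deriv h t‖ ≤ C := by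
    have hall := MeasureTheory.ae_all_iff.2 hq_bd
    filter_upwards [hq_lim, hall] with t h1 h2
    exact le_of_tendsto h1.norm (Eventually.of_forall h2)
  have hInt : MeasureTheory.IntegrableOn (deriv h) (Set.Ioo (0:ℝ) 1) :=
    hCint.mono' hderiv_meas hbd_lim
  have hDCT := MeasureTheory.tendsto_integral_of_dominated_convergence
    (fun _ : ℝ => C) hq_meas hCint hq_bd hq_lim
  refine ⟨hInt, ?_⟩
  have hDCT' : Tendsto (fun k => (ε k)⁻¹ *
      ((∫ t in (1:ℝ)..(1 + ε k), h t) - ∫ t in (0:ℝ)..(ε k), h t)) atTop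
      (𝓝 (∫ t in Set.Ioo (0:ℝ) 1, deriv h t)) := by
    apply hDCT.congr
    intro k
    exact hIq k
  exact tendsto_nhds_unique hRlim hDCT'
lemma tube_null {n m : ℕ} (f : EuclideanSpace ℝ (Fin n) → EuclideanSpace ℝ (Fin m))
    {s : Set (EuclideanSpace ℝ (Fin n))} (hs : IsCompact s) {δ : ℝ} (hδ : 0 < δ)
    (hlip : ∀ x : EuclideanSpace ℝ (Fin n), (∃ p ∈ s, dist x p ≤ δ) →
      ∃ K : NNReal, LipschitzOnWith K f (closedBall x δ)) :
    volume {x : EuclideanSpace ℝ (Fin n) |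
      (∃ p ∈ s, dist x p ≤ δ) ∧ ¬ DifferentiableAt ℝ f x} = 0 := by
  have hTube : IsCompact (s + closedBall (0 : EuclideanSpace ℝ (Fin n)) δ) :=
    hs.add (isCompact_closedBall 0 δ)
  have hmem : ∀ x ∈ s + closedBall (0 : EuclideanSpace ℝ (Fin n)) δ,
      ∃ p ∈ s, dist x p ≤ δ := by
    rintro x ⟨p, hp, w, hw, rfl⟩
    refine ⟨p, hp, ?_⟩
    rw [dist_eq_norm]
    simpa using mem_closedBall_iff_norm.1 hw
  obtain ⟨t, htT, hcover⟩ := hTube.elim_nhds_subcover (fun x => ball x δ)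
    (fun x _ => ball_mem_nhds x hδ)
  have hae : ∀ x ∈ t, ∀ᵐ y : EuclideanSpace ℝ (Fin n),
      y ∈ ball x δ → DifferentiableAt ℝ f y := by
    intro x hx
    obtain ⟨K, hK⟩ := hlip x (hmem x (htT x hx))
    filter_upwards [hK.ae_differentiableWithinAt_of_mem (μ := volume)] with y hy hymem
    exact (hy (ball_subset_closedBall hymem)).differentiableAt
      (Filter.mem_of_superset (isOpen_ball.mem_nhds hymem) ball_subset_closedBall)
  have haeAll : ∀ᵐ y : EuclideanSpace ℝ (Fin n), ∀ x ∈ (t : Set (EuclideanSpace ℝ (Fin n))),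
      y ∈ ball x δ → DifferentiableAt ℝ f y :=
    (MeasureTheory.ae_ball_iff t.finite_toSet.countable).2 (fun x hx => hae x hx)
  rw [measure_eq_zero_iff_ae_notMem]
  filter_upwards [haeAll] with y hy
  rintro ⟨⟨p, hp, hyp⟩, hnd⟩
  have hyT : y ∈ s + closedBall (0 : EuclideanSpace ℝ (Fin n)) δ := by
    refine ⟨p, hp, y - p, ?_, by simp⟩
    rw [mem_closedBall_zero_iff, ← dist_eq_norm]
    exact hyp
  obtain ⟨x, hx, hyx⟩ := Set.mem_iUnion₂.1 (hcover hyT)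
  exact hnd (hy x hx hyx)

lemma good_shift {n : ℕ} {N : Set (EuclideanSpace ℝ (Fin n))} (hN : volume N = 0)
    (c w : EuclideanSpace ℝ (Fin n)) {δ' : ℝ} (hδ' : 0 < δ') :
    ∃ v : EuclideanSpace ℝ (Fin n), ‖v‖ < δ' ∧
      ∀ᵐ t ∂(volume.restrict (Set.Ioo (0:ℝ) 1)), c + v + t • w ∉ N := by
  set N' := toMeasurable volume N with hN'def
  have hN'meas : MeasurableSet N' := measurableSet_toMeasurable _ _
  have hN'null : volume N' = 0 := by rw [measure_toMeasurable]; exact hN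
  set S : Set (ℝ × EuclideanSpace ℝ (Fin n)) := {p | c + p.2 + p.1 • w ∈ N'} with hSdef
  have hφ : Continuous (fun p : ℝ × EuclideanSpace ℝ (Fin n) => c + p.2 + p.1 • w) := by
    fun_prop
  have hSmeas : MeasurableSet S := hφ.measurable hN'meas
  have hSnull : (volume.prod volume) S = 0 := by
    rw [MeasureTheory.Measure.prod_apply hSmeas]
    have : ∀ t : ℝ, volume (Prod.mk t ⁻¹' S) = 0 := by
      intro t
      have heq : ∀ v : EuclideanSpace ℝ (Fin n), c + v + t • w = (c + t • w) + v := by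
        intro v; abel
      have : Prod.mk t ⁻¹' S = (fun v => (c + t • w) + v) ⁻¹' N' := by
        ext v
        simp only [Set.mem_preimage, hSdef, Set.mem_setOf_eq, heq]
      rw [this, measure_preimage_add]
      exact hN'null
    simp only [this]
    simp
  have hSwapNull : (volume.prod volume) (Prod.swap ⁻¹' S :
      Set (EuclideanSpace ℝ (Fin n) × ℝ)) = 0 := by
    rw [← MeasureTheory.Measure.prod_swap]
    rw [MeasureTheory.Measure.map_apply measurable_swap (measurable_swap hSmeas)]
    have : Prod.swap ⁻¹' (Prod.swap ⁻¹' S) = S := by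
      ext p; simp
    rw [this]
    exact hSnull
  have hae : ∀ᵐ v ∂(volume : Measure (EuclideanSpace ℝ (Fin n))),
      ∀ᵐ t ∂(volume : Measure ℝ), c + v + t • w ∉ N' := by
    have h0 : ∀ᵐ p ∂((volume : Measure (EuclideanSpace ℝ (Fin n))).prod (volume : Measure ℝ)),
        p ∉ (Prod.swap ⁻¹' S : Set (EuclideanSpace ℝ (Fin n) × ℝ)) := by
      rw [MeasureTheory.ae_iff]
      simp only [not_not]; exact hSwapNull
    have := MeasureTheory.Measure.ae_ae_of_ae_prod h0
    filter_upwards [this] with v hv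
    filter_upwards [hv] with t ht
    simpa [hSdef] using ht
  by_contra hcon
  push_neg at hcon
  have hball : volume (ball (0 : EuclideanSpace ℝ (Fin n)) δ') ≤
      volume {v : EuclideanSpace ℝ (Fin n) |
        ¬ ∀ᵐ t ∂(volume : Measure ℝ), c + v + t • w ∉ N'}ᶜᶜ := by
    apply measure_mono
    intro v hv
    simp only [Set.mem_compl_iff, not_not, Set.mem_setOf_eq, compl_compl]
    intro hfull
    refine hcon v (mem_ball_zero_iff.1 hv) ?_
    apply MeasureTheory.ae_restrict_of_ae
    filter_upwards [hfull] with t ht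
    exact fun hmem => ht (subset_toMeasurable _ _ hmem)
  rw [compl_compl] at hball
  have : volume {v : EuclideanSpace ℝ (Fin n) |
      ¬ ∀ᵐ t ∂(volume : Measure ℝ), c + v + t • w ∉ N'} = 0 := hae
  rw [this] at hball
  exact absurd (le_antisymm hball zero_le) (Metric.measure_ball_pos volume 0 hδ').ne'

lemma key_step {n m : ℕ}
    {D : Set (EuclideanSpace ℝ (Fin n))}
    {f : EuclideanSpace ℝ (Fin n) → EuclideanSpace ℝ (Fin m)}
    (a b : EuclideanSpace ℝ (Fin n))
    {δ : ℝ} (hδ : 0 < δ) {K : NNReal}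
    (hKd : ∀ x : EuclideanSpace ℝ (Fin n), (∃ p ∈ segment ℝ a b, dist x p ≤ δ) →
      Metric.closedBall x δ ⊆ D ∧ LipschitzOnWith K f (Metric.closedBall x δ))
    (ℓ : EuclideanSpace ℝ (Fin m) →L[ℝ] ℝ)
    {v : EuclideanSpace ℝ (Fin n)} (hv : ‖v‖ < δ / 2)
    (hgood : ∀ᵐ t ∂(volume.restrict (Set.Ioo (0:ℝ) 1)),
      DifferentiableAt ℝ f (a + v + t • (b - a)))
    {η : ℝ} (hη : 0 < η) :
    ∃ x : EuclideanSpace ℝ (Fin n), x ∈ D ∧ DifferentiableAt ℝ f x ∧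
      (∃ p ∈ segment ℝ a b, dist x p ≤ ‖v‖) ∧
      ℓ (f (b + v)) - ℓ (f (a + v)) - η < ℓ (fderiv ℝ f x (b - a)) := by
  set c : ℝ → EuclideanSpace ℝ (Fin n) := fun t => a + v + t • (b - a) with hcdef
  set h : ℝ → ℝ := fun t => ℓ (f (c t)) with hhdef
  set r : ℝ := δ / (2 * (‖b - a‖ + 1)) with hrdef
  have hr : 0 < r := by positivity
  have hrb : r * ‖b - a‖ ≤ δ / 2 := by
    rw [hrdef, div_mul_eq_mul_div, div_le_div_iff₀ (by positivity) (by norm_num)]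
    nlinarith [norm_nonneg (b - a)]
  -- every c t for t ∈ [0, 1+r] is within δ of the segment
  have hctube : ∀ t ∈ Set.Icc (0:ℝ) (1 + r), ∃ p ∈ segment ℝ a b, dist (c t) p ≤ δ := by
    intro t ht
    refine ⟨a + (min t 1) • (b - a), ?_, ?_⟩
    · rw [segment_eq_image']
      exact ⟨min t 1, ⟨le_min ht.1 zero_le_one, min_le_right _ _⟩, rfl⟩
    · have : c t - (a + (min t 1) • (b - a)) = v + (t - min t 1) • (b - a) := by
        rw [hcdef]
        simp only [sub_smul]
        abel
      rw [dist_eq_norm, this]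
      have h1 : 0 ≤ t - min t 1 := by
        rcases min_le_iff.1 (le_refl (min t 1)) with h | h
        · simp [min_def]; split <;> linarith
        · simp [min_def]; split <;> linarith
      have h2 : t - min t 1 ≤ r := by
        rcases le_or_gt t 1 with h | h
        · rw [min_eq_left h]; simpa using hr.le
        · rw [min_eq_right h.le]; linarith [ht.2]
      calc ‖v + (t - min t 1) • (b - a)‖ ≤ ‖v‖ + ‖(t - min t 1) • (b - a)‖ := norm_add_le _ _
        _ = ‖v‖ + (t - min t 1) * ‖b - a‖ := by rw [norm_smul, Real.norm_eq_abs, abs_of_nonneg h1]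
        _ ≤ δ / 2 + r * ‖b - a‖ := by
            refine add_le_add hv.le (mul_le_mul_of_nonneg_right h2 (norm_nonneg _))
        _ ≤ δ / 2 + δ / 2 := by linarith
        _ = δ := by ring
  set C : ℝ := ‖ℓ‖ * K * ‖b - a‖ with hCdef
  have hC : 0 ≤ C := by positivity
  have hlip : ∀ t ∈ Set.Icc (0:ℝ) (1+r), ∀ s : ℝ, |s - t| ≤ r → |h s - h t| ≤ C * |s - t| := by
    intro t ht s hst
    obtain ⟨hsub, hK⟩ := hKd (c t) (hctube t ht)
    have hcs : c s ∈ closedBall (c t) δ := by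
      rw [mem_closedBall, dist_eq_norm]
      have : c s - c t = (s - t) • (b - a) := by rw [hcdef]; simp only [sub_smul]; abel
      rw [this, norm_smul, Real.norm_eq_abs]
      calc |s - t| * ‖b - a‖ ≤ r * ‖b - a‖ :=
            mul_le_mul_of_nonneg_right hst (norm_nonneg _)
        _ ≤ δ / 2 := hrb
        _ ≤ δ := by linarith
    have hct : c t ∈ closedBall (c t) δ := mem_closedBall_self hδ.le
    have hd := hK.dist_le_mul (c s) hcs (c t) hct
    have : |h s - h t| = |ℓ (f (c s) - f (c t))| := by rw [hhdef]; simp [map_sub]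
    rw [this]
    calc |ℓ (f (c s) - f (c t))| ≤ ‖ℓ‖ * ‖f (c s) - f (c t)‖ := ℓ.le_opNorm _
      _ ≤ ‖ℓ‖ * (K * dist (c s) (c t)) := by
          refine mul_le_mul_of_nonneg_left ?_ (norm_nonneg ℓ)
          rw [← dist_eq_norm]; exact hd
      _ = ‖ℓ‖ * K * dist (c s) (c t) := by ring
      _ = ‖ℓ‖ * K * (|s - t| * ‖b - a‖) := by
          congr 1
          rw [dist_eq_norm]
          have : c s - c t = (s - t) • (b - a) := by rw [hcdef]; simp only [sub_smul]; abel
          rw [this, norm_smul, Real.norm_eq_abs]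
      _ = C * |s - t| := by rw [hCdef]; ring
  have hderivh : ∀ᵐ t ∂(volume.restrict (Set.Ioo (0:ℝ) 1)),
      DifferentiableAt ℝ h t ∧ deriv h t = ℓ (fderiv ℝ f (c t) (b - a)) := by
    filter_upwards [hgood] with t ht
    have hc : HasDerivAt c (b - a) t := by
      have h1 : HasDerivAt (fun t : ℝ => t • (b - a)) ((1:ℝ) • (b - a)) t :=
        (hasDerivAt_id t).smul_const (b - a)
      rw [one_smul] at h1
      exact h1.const_add (a + v)
    have hfc : HasDerivAt (fun t => f (c t)) (fderiv ℝ f (c t) (b - a)) t :=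
      ht.hasFDerivAt.comp_hasDerivAt t hc
    have hh : HasDerivAt h (ℓ (fderiv ℝ f (c t) (b - a))) t :=
      ℓ.hasFDerivAt.comp_hasDerivAt t hfc
    exact ⟨hh.differentiableAt, hh.deriv⟩
  obtain ⟨hInt, hFTC⟩ := lip_ftc hr hC hlip (by filter_upwards [hderivh] with t ht; exact ht.1)
  have hh1 : h 1 = ℓ (f (b + v)) := by
    rw [hhdef]
    congr 2
    rw [hcdef]; simp; abel
  have hh0 : h 0 = ℓ (f (a + v)) := by
    rw [hhdef]
    congr 2
    rw [hcdef]; simp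
  by_contra hcon
  push_neg at hcon
  have hae : ∀ᵐ t ∂(volume.restrict (Set.Ioo (0:ℝ) 1)),
      deriv h t ≤ (h 1 - h 0) - η := by
    filter_upwards [hgood, hderivh, MeasureTheory.ae_restrict_mem measurableSet_Ioo]
      with t ht hdt htI
    have htube : ∃ p ∈ segment ℝ a b, dist (c t) p ≤ δ :=
      hctube t ⟨htI.1.le, by linarith [htI.2, hr.le]⟩
    have hmemD : c t ∈ D := (hKd (c t) htube).1 (mem_closedBall_self hδ.le)
    have hseg : ∃ p ∈ segment ℝ a b, dist (c t) p ≤ ‖v‖ := by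
      refine ⟨a + t • (b - a), ?_, ?_⟩
      · rw [segment_eq_image']
        exact ⟨t, ⟨htI.1.le, htI.2.le⟩, rfl⟩
      · rw [dist_eq_norm]
        have : c t - (a + t • (b - a)) = v := by rw [hcdef]; module
        rw [this]
    have := hcon (c t) hmemD ht hseg
    rw [hdt.2, hh1, hh0]
    linarith
  have hconst : MeasureTheory.IntegrableOn (fun _ : ℝ => (h 1 - h 0) - η) (Set.Ioo (0:ℝ) 1) := by
    exact MeasureTheory.integrableOn_const measure_Ioo_lt_top.ne
  have hle := MeasureTheory.integral_mono_ae hInt hconst hae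
  rw [← hFTC] at hle
  have : ∫ _t in Set.Ioo (0:ℝ) 1, ((h 1 - h 0) - η) = (h 1 - h 0) - η := by
    rw [MeasureTheory.setIntegral_const, Real.volume_real_Ioo]
    norm_num
  rw [this] at hle
  linarith

end Auxiliary

open Filter Topology Pointwise MeasureTheory Metric in
/-- Vector-valued mean value theorem for Clarke's generalized Jacobian. -/
theorem clarkeJacobian_mean_value {n m : ℕ}
    (D : Set (EuclideanSpace ℝ (Fin n))) (hD : IsOpen D) (hDconv : Convex ℝ D)
    (f : EuclideanSpace ℝ (Fin n) → EuclideanSpace ℝ (Fin m))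
    (hf : LocallyLipschitzOnSet D f)
    (a b : EuclideanSpace ℝ (Fin n)) (ha : a ∈ D) (hb : b ∈ D) :
    f b - f a ∈ closure (convexHull ℝ
      {y | ∃ x ∈ segment ℝ a b, ∃ A ∈ clarkeJacobian D f x, A (b - a) = y}) := by
  classical
  set S := {y | ∃ x ∈ segment ℝ a b, ∃ A ∈ clarkeJacobian D f x, A (b - a) = y} with hSdef
  have hseg : IsCompact (segment ℝ a b) := by
    rw [segment_eq_image']
    exact isCompact_Icc.image (by continuity)
  have hsegD : segment ℝ a b ⊆ D := hDconv.segment_subset ha hb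
  obtain ⟨δ, hδ, K, hKd⟩ := exists_unif_lip hD (fun p hp => hf p hp) hseg hsegD
  -- null set of non-differentiability in the tube
  have hNull := tube_null f hseg hδ (fun x hx => ⟨K, (hKd x hx).2⟩)
  by_contra hnot
  obtain ⟨ℓ, u, hlt, hgt⟩ := geometric_hahn_banach_closed_point
    ((convex_convexHull ℝ S).closure) isClosed_closure hnot
  -- for each j, find a differentiability point near the segment with large ℓ-value
  have hexists : ∀ j : ℕ, ∃ v : EuclideanSpace ℝ (Fin n),
      ∃ x : EuclideanSpace ℝ (Fin n),
      ‖v‖ < min (δ / 2) (1 / (j + 1)) ∧ x ∈ D ∧ DifferentiableAt ℝ f x ∧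
      (∃ p ∈ segment ℝ a b, dist x p ≤ ‖v‖) ∧
      ℓ (f (b + v)) - ℓ (f (a + v)) - 1 / (j + 1) < ℓ (fderiv ℝ f x (b - a)) := by
    intro j
    have hδ' : 0 < min (δ / 2) (1 / ((j:ℝ) + 1)) := lt_min (by linarith) (by positivity)
    obtain ⟨v, hvlt, hvgood⟩ := good_shift hNull a (b - a) hδ'
    have hvlt2 : ‖v‖ < δ / 2 := lt_of_lt_of_le hvlt (min_le_left _ _)
    have hgood : ∀ᵐ t ∂(volume.restrict (Set.Ioo (0:ℝ) 1)),
        DifferentiableAt ℝ f (a + v + t • (b - a)) := by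
      filter_upwards [hvgood, MeasureTheory.ae_restrict_mem measurableSet_Ioo] with t ht htI
      by_contra hnd
      refine ht ⟨⟨a + t • (b - a), ?_, ?_⟩, hnd⟩
      · rw [segment_eq_image']
        exact ⟨t, ⟨htI.1.le, htI.2.le⟩, rfl⟩
      · rw [dist_eq_norm]
        have : a + v + t • (b - a) - (a + t • (b - a)) = v := by module
        rw [this]
        linarith
    obtain ⟨x, h1, h2, h3, h4⟩ := key_step a b hδ hKd ℓ hvlt2 hgood
      (by positivity : (0:ℝ) < 1 / (j + 1))
    exact ⟨v, x, hvlt, h1, h2, h3, h4⟩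
  choose v x hvlt hxD hxdiff hxseg hxineq using hexists
  -- bounds and compactness
  have hxtube : ∀ j, ∃ p ∈ segment ℝ a b, dist (x j) p ≤ δ := by
    intro j
    obtain ⟨p, hp, hd⟩ := hxseg j
    exact ⟨p, hp, hd.trans (le_of_lt (lt_of_lt_of_le (hvlt j)
      ((min_le_left _ _).trans (by linarith))))⟩
  have hAbd : ∀ j, ‖fderiv ℝ f (x j)‖ ≤ K := by
    intro j
    exact norm_fderiv_le_of_lipschitzOn ℝ (closedBall_mem_nhds _ hδ) (hKd (x j) (hxtube j)).2
  have hTcomp : IsCompact ((segment ℝ a b + closedBall (0 : EuclideanSpace ℝ (Fin n)) δ) ×ˢ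
      closedBall (0 : EuclideanSpace ℝ (Fin n) →L[ℝ] EuclideanSpace ℝ (Fin m)) K) :=
    (hseg.add (isCompact_closedBall _ _)).prod (isCompact_closedBall _ _)
  have hmem : ∀ j, (x j, fderiv ℝ f (x j)) ∈
      ((segment ℝ a b + closedBall (0 : EuclideanSpace ℝ (Fin n)) δ) ×ˢ
      closedBall (0 : EuclideanSpace ℝ (Fin n) →L[ℝ] EuclideanSpace ℝ (Fin m)) K) := by
    intro j
    constructor
    · obtain ⟨p, hp, hd⟩ := hxtube j
      refine ⟨p, hp, x j - p, ?_, by simp⟩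
      rw [mem_closedBall_zero_iff, ← dist_eq_norm]
      exact hd
    · rw [mem_closedBall_zero_iff]
      exact hAbd j
  obtain ⟨⟨xe, Ae⟩, hlim_mem, φ, hφ, hφtend⟩ := hTcomp.tendsto_subseq hmem
  have hxtend : Tendsto (fun k => x (φ k)) atTop (𝓝 xe) :=
    (continuous_fst.tendsto _).comp hφtend
  have hAtend : Tendsto (fun k => fderiv ℝ f (x (φ k))) atTop (𝓝 Ae) :=
    (continuous_snd.tendsto _).comp hφtend
  -- norm of v tends to 0
  have hvnorm : ∀ j, ‖v j‖ < 1 / ((j:ℝ) + 1) :=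
    fun j => lt_of_lt_of_le (hvlt j) (min_le_right _ _)
  have hj0 : Tendsto (fun j : ℕ => 1 / ((j:ℝ) + 1)) atTop (𝓝 0) :=
    tendsto_one_div_add_atTop_nhds_zero_nat
  have hφ0 : Tendsto (fun k : ℕ => 1 / ((φ k : ℝ) + 1)) atTop (𝓝 0) := by
    apply squeeze_zero (fun k => by positivity) (fun k => ?_) hj0
    have : (k : ℝ) + 1 ≤ (φ k : ℝ) + 1 := by
      have h3 : k ≤ φ k := hφ.le_apply
      linarith [(Nat.cast_le (α := ℝ)).2 h3]
    exact one_div_le_one_div_of_le (by positivity) this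
  have hvtend : Tendsto (fun k => v (φ k)) atTop (𝓝 0) := by
    rw [tendsto_zero_iff_norm_tendsto_zero]
    exact squeeze_zero (fun k => norm_nonneg _) (fun k => (hvnorm (φ k)).le) hφ0
  -- xe is in the segment
  have hxe : xe ∈ segment ℝ a b := by
    choose p hp hpd using hxseg
    have hptend : Tendsto (fun k => p (φ k)) atTop (𝓝 xe) := by
      rw [tendsto_iff_dist_tendsto_zero]
      apply squeeze_zero (fun k => dist_nonneg)
        (g := fun k => 1 / ((φ k : ℝ) + 1) + dist (x (φ k)) xe)
      · intro k
        calc dist (p (φ k)) xe ≤ dist (p (φ k)) (x (φ k)) + dist (x (φ k)) xe :=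
              dist_triangle _ _ _
          _ ≤ 1 / ((φ k : ℝ) + 1) + dist (x (φ k)) xe := by
              have h1 := hpd (φ k)
              have h2 := (hvnorm (φ k)).le
              rw [dist_comm]
              exact add_le_add (h1.trans h2) le_rfl
      · simpa using hφ0.add (tendsto_iff_dist_tendsto_zero.1 hxtend)
    exact hseg.isClosed.mem_of_tendsto hptend (Eventually.of_forall fun k => hp (φ k))
  -- Ae is in the Clarke Jacobian at xe
  have hAe : Ae ∈ clarkeJacobian D f xe := by
    apply subset_convexHull
    exact ⟨fun k => x (φ k), fun k => ⟨hxD (φ k), hxdiff (φ k)⟩, hxtend, hAtend⟩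
  have hAS : Ae (b - a) ∈ S := ⟨xe, hxe, Ae, hAe, rfl⟩
  have hAC : ℓ (Ae (b - a)) < u := hlt _ (subset_closure (subset_convexHull ℝ S hAS))
  -- limit inequality
  have hcontf : ∀ z ∈ segment ℝ a b, ContinuousAt f z := by
    intro z hz
    exact ((hKd z ⟨z, hz, by simp [hδ.le]⟩).2.continuousOn).continuousAt
      (closedBall_mem_nhds _ hδ)
  have hfb : Tendsto (fun k => f (b + v (φ k))) atTop (𝓝 (f b)) := by
    apply (hcontf b (right_mem_segment ℝ a b)).tendsto.comp
    simpa using (tendsto_const_nhds (x := b)).add hvtend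
  have hfa : Tendsto (fun k => f (a + v (φ k))) atTop (𝓝 (f a)) := by
    apply (hcontf a (left_mem_segment ℝ a b)).tendsto.comp
    simpa using (tendsto_const_nhds (x := a)).add hvtend
  have hRtend : Tendsto (fun k => ℓ (f (b + v (φ k))) - ℓ (f (a + v (φ k))) - 1 / ((φ k : ℝ) + 1))
      atTop (𝓝 (ℓ (f b - f a))) := by
    have := ((ℓ.continuous.tendsto _).comp hfb).sub (((ℓ.continuous.tendsto _).comp hfa))
    have h2 := this.sub hφ0
    simpa [map_sub] using h2
  have hLtend : Tendsto (fun k => ℓ (fderiv ℝ f (x (φ k)) (b - a))) atTop (𝓝 (ℓ (Ae (b - a)))) := by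
    have hev : Continuous fun A : EuclideanSpace ℝ (Fin n) →L[ℝ] EuclideanSpace ℝ (Fin m) =>
        A (b - a) := (ContinuousLinearMap.apply ℝ (EuclideanSpace ℝ (Fin m)) (b - a)).continuous
    exact (ℓ.continuous.tendsto _).comp ((hev.tendsto _).comp hAtend)
  have hfinal : ℓ (f b - f a) ≤ ℓ (Ae (b - a)) := by
    apply le_of_tendsto_of_tendsto' hRtend hLtend
    intro k
    exact (hxineq (φ k)).le
  linarith
end
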